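/- (eq. 1.3, proved in Appendix A of [CKMN]) For every integer n ≥ 2, L_n = ⁅L₁, L_{n−1}⁆, i.e. the degree-n piece of the grading equals the span of brackets of degree-1 elements with degree-(n−1) elements. -/

import Mathlib

/-!
Statement 5 (eq. 1.3): for a family `(L_n)_{n ≥ 1}` of subspaces of a Lie algebra `L`
over a field `K` with `⁅L_i, L_j⁆ ⊆ L_{i+j}`, whose sum is direct, and with every `L_n`
contained in the Lie subalgebra generated by `L₁`, one has `L_n = ⁅L₁, L_{n-1}⁆` for
every `n ≥ 2`.
-/

/-- The `K`-submodule spanned by brackets `⁅x, y⁆` with `x ∈ M`, `y ∈ N`. -/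
def subBracket (K : Type*) [Field K] {L : Type*} [LieRing L] [LieAlgebra K L]
    (M N : Submodule K L) : Submodule K L :=
  Submodule.span K {z : L | ∃ x ∈ M, ∃ y ∈ N, z = ⁅x, y⁆}

/-- Auxiliary graded pieces generated from `F 1` by repeated bracketing. -/
def gpiece (K : Type*) [Field K] {L : Type*} [LieRing L] [LieAlgebra K L]
    (F : ℕ → Submodule K L) : ℕ → Submodule K L
  | 0 => ⊥
  | 1 => F 1
  | (n + 2) => subBracket K (F 1) (gpiece K F (n + 1))

theorem subBracket_mono_right {K : Type*} [Field K] {L : Type*} [LieRing L] [LieAlgebra K L]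
    (M : Submodule K L) {N N' : Submodule K L} (h : N ≤ N') :
    subBracket K M N ≤ subBracket K M N' := by
  apply Submodule.span_mono
  rintro z ⟨x, hx, y, hy, rfl⟩
  exact ⟨x, hx, y, h hy, rfl⟩

theorem gpiece_le {K : Type*} [Field K] {L : Type*} [LieRing L] [LieAlgebra K L]
    (F : ℕ → Submodule K L)
    (hgrad : ∀ i j : ℕ, 1 ≤ i → 1 ≤ j → subBracket K (F i) (F j) ≤ F (i + j)) :
    ∀ n : ℕ, 1 ≤ n → gpiece K F n ≤ F n := by
  intro n
  induction n with
  | zero => intro h; omega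
  | succ n ih =>
    intro _
    match n with
    | 0 => exact le_rfl
    | (m + 1) =>
      calc gpiece K F (m + 2) = subBracket K (F 1) (gpiece K F (m + 1)) := rfl
        _ ≤ subBracket K (F 1) (F (m + 1)) := subBracket_mono_right _ (ih (by omega))
        _ ≤ F (1 + (m + 1)) := hgrad 1 (m + 1) le_rfl (by omega)
        _ = F (m + 2) := by rw [Nat.add_comm]

theorem lie_mem_gpiece {K : Type*} [Field K] {L : Type*} [LieRing L] [LieAlgebra K L]
    (F : ℕ → Submodule K L) :
    ∀ i j : ℕ, ∀ x ∈ gpiece K F i, ∀ y ∈ gpiece K F j, ⁅x, y⁆ ∈ gpiece K F (i + j) := by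
  intro i
  induction i using Nat.strong_induction_on with
  | _ i ih =>
  match i with
  | 0 =>
    intro j x hx y hy
    have : x = 0 := by simpa [gpiece] using hx
    simp [this]
  | 1 =>
    intro j x hx y hy
    match j with
    | 0 =>
      have : y = 0 := by simpa [gpiece] using hy
      simp [this]
    | (j + 1) =>
      have h : ⁅x, y⁆ ∈ subBracket K (F 1) (gpiece K F (j + 1)) :=
        Submodule.subset_span ⟨x, hx, y, hy, rfl⟩
      have he : (1 : ℕ) + (j + 1) = j + 1 + 1 := by omega
      rw [he]
      exact h
  | (k + 2) =>
    intro j x hx y hy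
    have hx' : x ∈ subBracket K (F 1) (gpiece K F (k + 1)) := hx
    refine Submodule.span_induction ?_ ?_ ?_ ?_ hx'
    · rintro z ⟨a, ha, b, hb, rfl⟩
      rw [lie_lie]
      have hby : ⁅b, y⁆ ∈ gpiece K F (k + 1 + j) := ih (k + 1) (by omega) j b hb y hy
      have h1 : ⁅a, ⁅b, y⁆⁆ ∈ gpiece K F (1 + (k + 1 + j)) :=
        ih 1 (by omega) (k + 1 + j) a ha _ hby
      have hay : ⁅a, y⁆ ∈ gpiece K F (1 + j) := ih 1 (by omega) j a ha y hy
      have h2 : ⁅b, ⁅a, y⁆⁆ ∈ gpiece K F (k + 1 + (1 + j)) :=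
        ih (k + 1) (by omega) (1 + j) b hb _ hay
      have e1 : 1 + (k + 1 + j) = k + 2 + j := by omega
      have e2 : k + 1 + (1 + j) = k + 2 + j := by omega
      rw [e1] at h1; rw [e2] at h2
      exact sub_mem h1 h2
    · simp
    · intro a b _ _ ha hb
      rw [add_lie]; exact add_mem ha hb
    · intro c a _ ha
      rw [smul_lie]; exact Submodule.smul_mem _ c ha

theorem graded_piece_eq_bracket_with_level_one
    {K : Type*} [Field K] {L : Type*} [LieRing L] [LieAlgebra K L]
    (F : ℕ → Submodule K L)
    -- `⁅L_i, L_j⁆ ⊆ L_{i+j}` for `i, j ≥ 1`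
    (hgrad : ∀ i j : ℕ, 1 ≤ i → 1 ≤ j → subBracket K (F i) (F j) ≤ F (i + j))
    -- the family `(L_n)_{n ≥ 1}` is linearly independent (its sum is direct)
    (hind : ∀ n : ℕ, 1 ≤ n →
      Disjoint (F n) (⨆ (m : ℕ) (_ : 1 ≤ m) (_ : m ≠ n), F m))
    -- every `L_n` is contained in the Lie subalgebra generated by `L₁`
    (hgen : ∀ n : ℕ, 1 ≤ n →
      F n ≤ (LieSubalgebra.lieSpan K L (F 1 : Set L)).toSubmodule) :
    ∀ n : ℕ, 2 ≤ n → F n = subBracket K (F 1) (F (n - 1)) := by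
  set M : Submodule K L := ⨆ n : ℕ, gpiece K F n with hM
  -- `M` is closed under the bracket
  have hMlie : ∀ a ∈ M, ∀ b ∈ M, ⁅a, b⁆ ∈ M := by
    intro a ha b hb
    refine Submodule.iSup_induction (motive := fun a => ⁅a, b⁆ ∈ M) _ ha ?_ (by simp) ?_
    · intro i x hx
      refine Submodule.iSup_induction (motive := fun b => ⁅x, b⁆ ∈ M) _ hb ?_ (by simp) ?_
      · intro j y hy
        exact le_iSup (fun n => gpiece K F n) (i + j) (lie_mem_gpiece F i j x hx y hy)
      · intro y z hy hz
        rw [lie_add]; exact add_mem hy hz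
    · intro x y hx hy
      rw [add_lie]; exact add_mem hx hy
  -- `M` as a Lie subalgebra
  let S : LieSubalgebra K L :=
    { M with lie_mem' := fun {a b} ha hb => hMlie a ha b hb }
  have hle : (LieSubalgebra.lieSpan K L (F 1 : Set L)).toSubmodule ≤ M := by
    have : LieSubalgebra.lieSpan K L (F 1 : Set L) ≤ S := by
      rw [LieSubalgebra.lieSpan_le]
      intro x hx
      exact le_iSup (fun n => gpiece K F n) 1 hx
    exact this
  -- key identity `F n = gpiece n` for `n ≥ 1`
  have key : ∀ n : ℕ, 1 ≤ n → F n = gpiece K F n := by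
    intro n hn
    refine le_antisymm ?_ (gpiece_le F hgrad n hn)
    intro x hx
    have hxM : x ∈ M := hle (hgen n hn hx)
    have hMP : M ≤ gpiece K F n ⊔ (⨆ (m : ℕ) (_ : 1 ≤ m) (_ : m ≠ n), F m) := by
      refine iSup_le fun m => ?_
      rcases Nat.eq_zero_or_pos m with hm0 | hm1
      · subst hm0; simp [gpiece]
      · by_cases hmn : m = n
        · subst hmn; exact le_sup_left
        · refine le_trans (gpiece_le F hgrad m hm1) (le_trans ?_ le_sup_right)
          exact le_iSup_of_le m (by rw [iSup_pos (show (1:ℕ) ≤ m from hm1), iSup_pos hmn])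
    obtain ⟨g, hg, f, hf, hx'⟩ := Submodule.mem_sup.mp (hMP hxM)
    have hgF : g ∈ F n := gpiece_le F hgrad n hn hg
    have hdiff : x - g ∈ F n ⊓ (⨆ (m : ℕ) (_ : 1 ≤ m) (_ : m ≠ n), F m) := by
      constructor
      · exact sub_mem hx hgF
      · have : x - g = f := by rw [← hx']; abel
        rw [this]; exact hf
    have : x - g = 0 := by
      have := (hind n hn).le_bot hdiff
      simpa using this
    have : x = g := by
      have := sub_eq_zero.mp this
      exact this
    rw [this]; exact hg
  intro n hn
  obtain ⟨k, rfl⟩ : ∃ k, n = k + 2 := ⟨n - 2, by omega⟩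
  have h1 : F (k + 2) = gpiece K F (k + 2) := key (k + 2) (by omega)
  have h2 : gpiece K F (k + 2) = subBracket K (F 1) (gpiece K F (k + 1)) := rfl
  have h3 : gpiece K F (k + 1) = F (k + 1) := (key (k + 1) (by omega)).symm
  rw [h1, h2, h3]
  norm_num
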